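/- Let B be a d×d real matrix such that Bᵀ + B is negative semidefinite, let X ∈ ℝ^d, and let l be an ω-limit point of the trajectory t ↦ exp(tB)X, i.e., l = lim_{j→∞} exp(t_j B)X for some sequence (t_j) strictly increasing to +∞. Then for every t ∈ ℝ one has ‖exp(tB)l‖ = ‖l‖ and exp(tB)l ∈ ker(Bᵀ+B). -/

import Mathlib

open Matrix Filter

set_option maxHeartbeats 1000000
set_option synthInstance.maxHeartbeats 1000000

noncomputable section

variable {d : ℕ}

/-- The flow `t ↦ exp(tB)` of the linear ODE `ẋ = Bx`, as a continuous linear map. -/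
def expFlow (B : Matrix (Fin d) (Fin d) ℝ) (t : ℝ) :
    EuclideanSpace ℝ (Fin d) →L[ℝ] EuclideanSpace ℝ (Fin d) :=
  NormedSpace.exp (t • LinearMap.toContinuousLinearMap (Matrix.toEuclideanLin B))

lemma expFlow_add (B : Matrix (Fin d) (Fin d) ℝ) (s t : ℝ) :
    expFlow B (s + t) = expFlow B s * expFlow B t := by
  unfold expFlow
  have h : (s + t) • LinearMap.toContinuousLinearMap (Matrix.toEuclideanLin B)
      = s • LinearMap.toContinuousLinearMap (Matrix.toEuclideanLin B)
        + t • LinearMap.toContinuousLinearMap (Matrix.toEuclideanLin B) := by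
    ext x i
    simp only [ContinuousLinearMap.add_apply, ContinuousLinearMap.smul_apply, PiLp.smul_apply,
      PiLp.add_apply, smul_eq_mul]
    ring
  rw [h]
  let +nondep : NormedAlgebra ℚ (EuclideanSpace ℝ (Fin d) →L[ℝ] EuclideanSpace ℝ (Fin d)) :=
    .restrictScalars ℚ ℝ _
  refine NormedSpace.exp_add_of_commute ?_
  show _ = _
  ext x
  simp only [ContinuousLinearMap.mul_apply, ContinuousLinearMap.smul_apply, _root_.map_smul,
    PiLp.smul_apply, smul_eq_mul]
  ring

lemma expFlow_hasDerivAt (B : Matrix (Fin d) (Fin d) ℝ) (x : EuclideanSpace ℝ (Fin d)) (t : ℝ) :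
    HasDerivAt (fun t => expFlow B t x)
      (LinearMap.toContinuousLinearMap (Matrix.toEuclideanLin B) (expFlow B t x)) t := by
  have h := hasDerivAt_exp_smul_const' (𝕂 := ℝ)
    (𝔸 := EuclideanSpace ℝ (Fin d) →L[ℝ] EuclideanSpace ℝ (Fin d))
    (LinearMap.toContinuousLinearMap (Matrix.toEuclideanLin B)) t
  have h2 := h.clm_apply (hasDerivAt_const t x)
  simpa [expFlow] using h2

lemma inner_toEuclidean (M : Matrix (Fin d) (Fin d) ℝ) (x y : EuclideanSpace ℝ (Fin d)) :
    inner ℝ (LinearMap.toContinuousLinearMap (Matrix.toEuclideanLin M) x) y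
      = (M *ᵥ (WithLp.equiv 2 _ x)) ⬝ᵥ (WithLp.equiv 2 _ y) := by
  simp [PiLp.inner_apply, Matrix.toEuclideanLin_apply, dotProduct, mul_comm]

lemma quad_hasDerivAt (B : Matrix (Fin d) (Fin d) ℝ) (x : EuclideanSpace ℝ (Fin d)) (t : ℝ) :
    HasDerivAt (fun s => ‖expFlow B s x‖ ^ 2)
      ((WithLp.equiv 2 _ (expFlow B t x)) ⬝ᵥ ((Bᵀ + B) *ᵥ (WithLp.equiv 2 _ (expFlow B t x)))) t := by
  have hf := expFlow_hasDerivAt B x t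
  have h := hf.inner ℝ hf
  have hfun : (fun s => (inner ℝ (expFlow B s x) (expFlow B s x) : ℝ))
      = fun s => ‖expFlow B s x‖ ^ 2 := by
    funext s; rw [real_inner_self_eq_norm_sq]
  rw [hfun] at h
  refine h.congr_deriv ?_
  set y := expFlow B t x with hy
  set yv := WithLp.equiv 2 (Fin d → ℝ) y with hyv
  have h1 : (inner ℝ (LinearMap.toContinuousLinearMap (Matrix.toEuclideanLin B) y) y : ℝ)
      = (B *ᵥ yv) ⬝ᵥ yv := inner_toEuclidean B y y
  have h2 : (inner ℝ y (LinearMap.toContinuousLinearMap (Matrix.toEuclideanLin B) y) : ℝ)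
      = (B *ᵥ yv) ⬝ᵥ yv := by rw [real_inner_comm]; exact h1
  rw [h1, h2]
  have h3 : yv ⬝ᵥ (Bᵀ *ᵥ yv) = (B *ᵥ yv) ⬝ᵥ yv := by
    rw [Matrix.mulVec_transpose, dotProduct_comm, ← Matrix.dotProduct_mulVec,
      dotProduct_comm]
  rw [Matrix.add_mulVec, dotProduct_add, h3, dotProduct_comm yv]

lemma norm_expFlow_antitone (B : Matrix (Fin d) (Fin d) ℝ)
    (hB : ∀ x : Fin d → ℝ, x ⬝ᵥ ((Bᵀ + B) *ᵥ x) ≤ 0) (x : EuclideanSpace ℝ (Fin d)) :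
    Antitone (fun t => ‖expFlow B t x‖) := by
  have hsq : Antitone (fun t => ‖expFlow B t x‖ ^ 2) := by
    apply antitone_of_deriv_nonpos
    · exact fun t => (quad_hasDerivAt B x t).differentiableAt
    · intro t
      rw [(quad_hasDerivAt B x t).deriv]
      exact hB _
  intro s t hst
  have h := hsq hst
  simp only at h
  nlinarith [h, norm_nonneg (expFlow B t x), norm_nonneg (expFlow B s x)]

/-- negative semidefinite symmetric matrix: zero quadratic form implies kernel. -/
lemma mulVec_eq_zero_of_quad_zero (M : Matrix (Fin d) (Fin d) ℝ)
    (hM : ∀ x : Fin d → ℝ, x ⬝ᵥ (M *ᵥ x) ≤ 0) (hsymm : Mᵀ = M)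
    (y : Fin d → ℝ) (hy : y ⬝ᵥ (M *ᵥ y) = 0) : M *ᵥ y = 0 := by
  have key : ∀ v : Fin d → ℝ, v ⬝ᵥ (M *ᵥ y) = 0 := by
    intro v
    have hsy : y ⬝ᵥ (M *ᵥ v) = v ⬝ᵥ (M *ᵥ y) := by
      rw [Matrix.dotProduct_mulVec, ← Matrix.mulVec_transpose, hsymm, dotProduct_comm]
    have hquad : ∀ s : ℝ, 2 * s * (v ⬝ᵥ (M *ᵥ y)) + s ^ 2 * (v ⬝ᵥ (M *ᵥ v)) ≤ 0 := by
      intro s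
      have h := hM (y + s • v)
      simp only [Matrix.mulVec_add, Matrix.mulVec_smul, dotProduct_add,
        add_dotProduct, dotProduct_smul, smul_dotProduct, smul_eq_mul] at h
      rw [hy] at h
      rw [hsy] at h
      nlinarith [h]
    have hb0 : v ⬝ᵥ (M *ᵥ v) ≤ 0 := hM v
    set a := v ⬝ᵥ (M *ᵥ y) with ha
    set b := v ⬝ᵥ (M *ᵥ v) with hb
    set ε : ℝ := 1 / (1 + |b|) with hε
    have hεpos : 0 < ε := by positivity
    have hεb : 0 < 2 + ε * b := by
      have h1 : |b| / (1 + |b|) < 1 := by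
        rw [div_lt_one (by positivity)]; linarith [abs_nonneg b]
      have h2 : ε * |b| < 1 := by rw [hε, div_mul_eq_mul_div, one_mul]; exact h1
      have h3 : -(ε * |b|) ≤ ε * b := by nlinarith [neg_abs_le b, hεpos.le]
      linarith
    have hq := hquad (a * ε)
    have hid : a ^ 2 * (ε * (2 + ε * b)) = 2 * (a * ε) * a + (a * ε) ^ 2 * b := by ring
    have h4 : a ^ 2 * (ε * (2 + ε * b)) ≤ 0 := by rw [hid]; exact hq
    have h5 : 0 < ε * (2 + ε * b) := mul_pos hεpos hεb
    have h6 : a ^ 2 ≤ 0 := by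
      by_contra hcon
      push_neg at hcon
      nlinarith
    have h7 : a ^ 2 = 0 := le_antisymm h6 (sq_nonneg a)
    exact pow_eq_zero_iff two_ne_zero |>.mp h7
  have := key (M *ᵥ y)
  exact dotProduct_self_eq_zero.mp this

/-- If `Bᵀ + B` is negative semidefinite and `l` is an ω-limit point of
the trajectory `t ↦ exp(tB)X` (i.e. `l = lim_j exp(t_j B)X` along a sequence strictly
increasing to `+∞`), then for every `t ∈ ℝ`, `‖exp(tB)l‖ = ‖l‖` and
`exp(tB)l ∈ ker(Bᵀ + B)`. -/
theorem omega_limit_in_kernel (B : Matrix (Fin d) (Fin d) ℝ)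
    (hB : ∀ x : Fin d → ℝ, x ⬝ᵥ ((Bᵀ + B) *ᵥ x) ≤ 0)
    (X l : EuclideanSpace ℝ (Fin d)) (tseq : ℕ → ℝ)
    (htseq : StrictMono tseq) (htop : Tendsto tseq atTop atTop)
    (hlim : Tendsto (fun j => expFlow B (tseq j) X) atTop (nhds l)) :
    ∀ t : ℝ, ‖expFlow B t l‖ = ‖l‖ ∧
      expFlow B t l ∈ LinearMap.ker (Matrix.toEuclideanLin (Bᵀ + B)) := by
  have hanti := norm_expFlow_antitone B hB X
  have hbdd : BddBelow (Set.range fun t => ‖expFlow B t X‖) :=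
    ⟨0, fun x ⟨t, ht⟩ => ht ▸ norm_nonneg _⟩
  have hc : Tendsto (fun t => ‖expFlow B t X‖) atTop (nhds (⨅ t, ‖expFlow B t X‖)) :=
    tendsto_atTop_ciInf hanti hbdd
  set c := ⨅ t, ‖expFlow B t X‖ with hcdef
  have hnl : ‖l‖ = c := tendsto_nhds_unique hlim.norm (hc.comp htop)
  -- part 1
  have part1 : ∀ t : ℝ, ‖expFlow B t l‖ = ‖l‖ := by
    intro t
    have hseq : Tendsto (fun j => expFlow B (t + tseq j) X) atTop (nhds (expFlow B t l)) := by
      have : (fun j => expFlow B (t + tseq j) X) = fun j => expFlow B t (expFlow B (tseq j) X) := by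
        funext j; rw [expFlow_add]; rfl
      rw [this]
      exact ((expFlow B t).continuous.continuousAt.tendsto).comp hlim
    have h1 : Tendsto (fun j => ‖expFlow B (t + tseq j) X‖) atTop (nhds ‖expFlow B t l‖) :=
      hseq.norm
    have h2 : Tendsto (fun j => ‖expFlow B (t + tseq j) X‖) atTop (nhds c) := by
      have htop' : Tendsto (fun j => t + tseq j) atTop atTop :=
        tendsto_atTop_add_const_left atTop t htop
      exact hc.comp htop'
    rw [tendsto_nhds_unique h1 h2, hnl]
  refine fun t => ⟨part1 t, ?_⟩
  -- part 2 : the quadratic form vanishes along the trajectory of l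
  have hconst : (fun s => ‖expFlow B s l‖ ^ 2) = fun _ => ‖l‖ ^ 2 := by
    funext s; rw [part1 s]
  have hzero : (WithLp.equiv 2 _ (expFlow B t l)) ⬝ᵥ
      ((Bᵀ + B) *ᵥ (WithLp.equiv 2 _ (expFlow B t l))) = 0 := by
    have hd := quad_hasDerivAt B l t
    rw [hconst] at hd
    have hd0 : HasDerivAt (fun _ : ℝ => ‖l‖ ^ 2) 0 t := hasDerivAt_const t _
    exact hd.unique hd0
  have hker := mulVec_eq_zero_of_quad_zero (Bᵀ + B) hB
    (by rw [Matrix.transpose_add, Matrix.transpose_transpose, add_comm]) _ hzero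
  rw [LinearMap.mem_ker, Matrix.toEuclideanLin_apply,
    show (Bᵀ + B) *ᵥ ((expFlow B t) l).ofLp = 0 from hker]
  simp

end
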